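/- A commutative ring A is quasi-Frobenius if and only if A is Noetherian and Ann_A(Ann_A(J)) = J for every ideal J of A. -/

import Mathlib

section Aux

variable {A : Type*} [CommRing A]

private lemma le_doubleAnn (J : Ideal A) : J ≤ J.annihilator.annihilator := by
  intro x hx
  rw [Submodule.mem_annihilator]
  intro n hn
  rw [Submodule.mem_annihilator] at hn
  rw [smul_eq_mul, mul_comm, ← smul_eq_mul]
  exact hn x hx

private lemma doubleAnn_step (inj : Module.Injective A A) (a : A) (I : Ideal A)
    (hI : I.annihilator.annihilator = I) :
    (Ideal.span {a} ⊔ I).annihilator.annihilator = Ideal.span {a} ⊔ I := by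
  refine le_antisymm ?_ (le_doubleAnn _)
  intro x hx
  set N := I.annihilator with hN
  let μ : N →ₗ[A] A := (LinearMap.mul A A a).comp N.subtype
  let ψ : N →ₗ[A] A := (LinearMap.mul A A x).comp N.subtype
  have hker : LinearMap.ker μ ≤ LinearMap.ker ψ := by
    intro r hr
    have hr0 : a * (r : A) = 0 := hr
    have hrI' : (r : A) ∈ (Ideal.span {a} ⊔ I).annihilator := by
      rw [Submodule.mem_annihilator]
      intro n hn
      obtain ⟨s, hs, i, hi, rfl⟩ := Submodule.mem_sup.1 hn
      obtain ⟨t, rfl⟩ := Ideal.mem_span_singleton'.1 hs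
      have hri : (r : A) • i = 0 := (Submodule.mem_annihilator.1 r.2) i hi
      rw [smul_eq_mul] at hri ⊢
      calc (r : A) * (t * a + i) = t * (a * r) + r * i := by ring
        _ = 0 := by rw [hr0, hri]; ring
    have : x • (r : A) = 0 := (Submodule.mem_annihilator.1 hx) r hrI'
    simpa [ψ, LinearMap.mem_ker] using this
  let ι : (N ⧸ LinearMap.ker μ) →ₗ[A] A := (LinearMap.ker μ).liftQ μ le_rfl
  have hι : Function.Injective ι := by
    rw [← LinearMap.ker_eq_bot]
    exact Submodule.ker_liftQ_eq_bot _ _ _ le_rfl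
  let ψ' : (N ⧸ LinearMap.ker μ) →ₗ[A] A := (LinearMap.ker μ).liftQ ψ hker
  obtain ⟨h, hh⟩ := inj.out ι hι ψ'
  set c := h 1 with hc
  have key : ∀ r : N, x * (r : A) = a * (r : A) * c := by
    intro r
    have h1 : ψ' (Submodule.Quotient.mk r) = ψ r := rfl
    have h2 : ι (Submodule.Quotient.mk r) = μ r := rfl
    have := hh (Submodule.Quotient.mk r)
    rw [h1, h2] at this
    have h3 : h (μ r) = (a * (r : A)) • h 1 := by
      rw [← map_smul, smul_eq_mul, mul_one]; rfl
    have h4 : ψ r = x * (r : A) := rfl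
    rw [h3, h4] at this
    rw [← this, smul_eq_mul]
  have hxca : x - c * a ∈ I := by
    rw [← hI, Submodule.mem_annihilator]
    intro n hn
    have := key ⟨n, hn⟩
    rw [smul_eq_mul, sub_mul, this]
    ring
  have : x = c * a + (x - c * a) := by ring
  rw [this]
  exact Submodule.add_mem_sup (Ideal.mem_span_singleton'.2 ⟨c, rfl⟩) hxca

private lemma baer_step (hd : ∀ J : Ideal A, J.annihilator.annihilator = J)
    (a : A) (I : Ideal A)
    (hI : ∀ g : I →ₗ[A] A, ∃ c : A, ∀ x (hx : x ∈ I), g ⟨x, hx⟩ = x * c)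
    (g : (Ideal.span {a} ⊔ I : Ideal A) →ₗ[A] A) :
    ∃ c : A, ∀ x (hx : x ∈ Ideal.span {a} ⊔ I), g ⟨x, hx⟩ = x * c := by
  have hII' : I ≤ Ideal.span {a} ⊔ I := le_sup_right
  obtain ⟨c, hc⟩ := hI (g.comp (Submodule.inclusion hII'))
  have hgI : ∀ x (hx : x ∈ I), g ⟨x, hII' hx⟩ = x * c := by
    intro x hx
    have := hc x hx
    exact this
  have ha : a ∈ Ideal.span {a} ⊔ I := Submodule.mem_sup_left (Ideal.mem_span_singleton_self a)
  set y := g ⟨a, ha⟩ - a * c with hy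
  set M := Ideal.span {a} * I.annihilator with hM
  have hyM : y ∈ M := by
    rw [← hd M, Submodule.mem_annihilator]
    intro t ht
    rw [Submodule.mem_annihilator] at ht
    have hta : t * a ∈ I := by
      rw [← hd I, Submodule.mem_annihilator]
      intro s hs
      have hasM : a * s ∈ M := Ideal.mul_mem_mul (Ideal.mem_span_singleton_self a) hs
      have := ht (a * s) hasM
      rw [smul_eq_mul] at this ⊢
      calc t * a * s = t * (a * s) := by ring
        _ = 0 := this
    have h1 : g ⟨t * a, hII' hta⟩ = t * a * c := hgI (t * a) hta
    have h2 : (⟨t * a, hII' hta⟩ : (Ideal.span {a} ⊔ I : Ideal A)) = t • ⟨a, ha⟩ := by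
      ext; simp [smul_eq_mul]
    rw [h2, map_smul, smul_eq_mul] at h1
    rw [smul_eq_mul, hy]
    calc y * t = t * g ⟨a, ha⟩ - t * a * c := by rw [hy]; ring
      _ = 0 := by rw [h1]; ring
  obtain ⟨d, hdI, hda⟩ : ∃ d ∈ I.annihilator, a * d = y :=
    Ideal.mem_span_singleton_mul.1 hyM
  refine ⟨c + d, ?_⟩
  intro x hx
  obtain ⟨s, hs, i, hi, hsi⟩ := Submodule.mem_sup.1 hx
  obtain ⟨t, hts⟩ := Ideal.mem_span_singleton'.1 hs
  have hxval : x = t * a + i := by rw [← hsi, ← hts]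
  have hsplit : (⟨x, hx⟩ : (Ideal.span {a} ⊔ I : Ideal A))
      = t • ⟨a, ha⟩ + ⟨i, hII' hi⟩ := by
    ext; simp [hxval, smul_eq_mul]
  have hdi : d * i = 0 := by
    have := (Submodule.mem_annihilator.1 hdI) i hi
    rwa [smul_eq_mul] at this
  have hga : g ⟨a, ha⟩ = a * c + a * d := by
    have : y = a * d := hda.symm
    rw [hy] at this
    linear_combination this
  rw [hsplit, map_add, map_smul, smul_eq_mul, hga, hgI i hi, hxval]
  linear_combination -hdi

end Aux

/-- A commutative ring is quasi-Frobenius if it is Noetherian and self-injective. -/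
def IsQuasiFrobenius (A : Type*) [CommRing A] : Prop :=
  IsNoetherianRing A ∧ Module.Injective A A

/-- `A` is quasi-Frobenius iff `A` is Noetherian and
`Ann_A(Ann_A(J)) = J` for every ideal `J` of `A`. -/
theorem quasiFrobenius_iff_double_annihilator (A : Type*) [CommRing A] :
    IsQuasiFrobenius A ↔
      (IsNoetherianRing A ∧ ∀ J : Ideal A, J.annihilator.annihilator = J) := by
  constructor
  · rintro ⟨noeth, inj⟩
    refine ⟨noeth, fun J => ?_⟩
    have : IsNoetherian A A := noeth
    obtain ⟨s, hs⟩ := (IsNoetherian.noetherian J : J.FG)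
    rw [← hs]
    clear hs
    classical
    induction s using Finset.induction_on with
    | empty =>
      simp only [Finset.coe_empty, Submodule.span_empty]
      refine le_antisymm ?_ (le_doubleAnn _)
      intro r hr
      rw [Submodule.annihilator_bot] at hr
      rw [Submodule.mem_annihilator] at hr
      have := hr 1 Submodule.mem_top
      rw [smul_eq_mul, mul_one] at this
      simpa using this
    | @insert a s ha ih =>
      rw [Finset.coe_insert, Submodule.span_insert]
      exact doubleAnn_step inj a _ ih
  · rintro ⟨noeth, hd⟩
    refine ⟨noeth, ?_⟩
    have : IsNoetherian A A := noeth
    have baer : Module.Baer A A := by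
      intro J g
      obtain ⟨s, hs⟩ := (IsNoetherian.noetherian J : J.FG)
      subst hs
      suffices h : ∀ g : (Ideal.span (s : Set A) : Ideal A) →ₗ[A] A,
          ∃ c : A, ∀ x (hx : x ∈ Ideal.span (s : Set A)), g ⟨x, hx⟩ = x * c by
        obtain ⟨c, hc⟩ := h g
        refine ⟨LinearMap.toSpanSingleton A A c, fun x hx => ?_⟩
        rw [LinearMap.toSpanSingleton_apply, smul_eq_mul]
        exact (hc x hx).symm
      clear g
      classical
      induction s using Finset.induction_on with
      | empty =>
        intro g
        refine ⟨0, fun x hx => ?_⟩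
        have hx0 : x = 0 := by simpa using hx
        subst hx0
        have h0 : (⟨(0 : A), hx⟩ : (Ideal.span ((∅ : Finset A) : Set A) : Ideal A)) = 0 := rfl
        rw [h0, map_zero, zero_mul]
      | @insert a s ha ih =>
        have he : Ideal.span (↑(insert a s) : Set A)
            = Ideal.span ({a} : Set A) ⊔ Ideal.span (↑s : Set A) := by
          rw [Finset.coe_insert, Ideal.span_insert]
        rw [he]
        exact fun g => baer_step hd a _ ih g
    exact baer.injective
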